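/- Gowers–Hölder inequality for grids: Fix positive integers k, ℓ and finite nonempty sets X, Y. For each i ∈ [k] and j ∈ [ℓ] let f_{ij} : X × Y → ℝ≥0 be a nonnegative function. Then E_{x₁,…,x_k ∈ X, y₁,…,y_ℓ ∈ Y}[∏_{i∈[k], j∈[ℓ]} f_{ij}(x_i, y_j)] ≤ ∏_{i∈[k], j∈[ℓ]} ( E_{x₁,…,x_k ∈ X, y₁,…,y_ℓ ∈ Y}[∏_{i'∈[k], j'∈[ℓ]} f_{ij}(x_{i'}, y_{j'})] )^{1/(kℓ)}. -/

import Mathlib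

open Finset

/-- Sum over a pi type of a product factors as a product of sums. -/
lemma sum_pi_prod {ι X M : Type*} [Fintype ι] [DecidableEq ι] [Fintype X]
    [CommSemiring M] (g : ι → X → M) :
    ∑ x : ι → X, ∏ i, g i (x i) = ∏ i, ∑ x : X, g i x := by
  rw [Finset.prod_univ_sum]
  rw [Fintype.piFinset_univ]

/-- Hölder's inequality with equal exponents for finitely many nonnegative functions
on a finite uniform space. -/
lemma holder_uniform {ι Ω : Type*} [Fintype Ω] (s : Finset ι) (hs : s.Nonempty)
    (F : ι → Ω → ℝ) (hF : ∀ i ω, 0 ≤ F i ω) :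
    ∑ ω : Ω, ∏ i ∈ s, F i ω ≤
      ∏ i ∈ s, (∑ ω : Ω, F i ω ^ (s.card : ℕ)) ^ ((s.card : ℝ)⁻¹) := by
  set n := s.card with hn
  have hn0 : 0 < n := Finset.card_pos.2 hs
  have hnR : (0 : ℝ) < (n : ℝ) := by exact_mod_cast hn0
  by_cases hzero : ∃ i ∈ s, (∑ ω : Ω, F i ω ^ n) = 0
  · obtain ⟨i, hi, h0⟩ := hzero
    have hFi : ∀ ω : Ω, F i ω = 0 := by
      intro ω
      have h := (Finset.sum_eq_zero_iff_of_nonneg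
        (fun ω _ => pow_nonneg (hF i ω) n)).1 h0 ω (Finset.mem_univ ω)
      exact pow_eq_zero_iff hn0.ne' |>.1 h
    have hL : ∑ ω : Ω, ∏ j ∈ s, F j ω = 0 :=
      Finset.sum_eq_zero fun ω _ => Finset.prod_eq_zero hi (hFi ω)
    rw [hL]
    refine Finset.prod_nonneg fun j _ => Real.rpow_nonneg ?_ _
    exact Finset.sum_nonneg fun ω _ => pow_nonneg (hF j ω) n
  · push_neg at hzero
    set S : ι → ℝ := fun i => ∑ ω : Ω, F i ω ^ n with hS
    have hSnn : ∀ i, 0 ≤ S i := fun i =>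
      Finset.sum_nonneg fun ω _ => pow_nonneg (hF i ω) n
    have hSpos : ∀ i ∈ s, 0 < S i := fun i hi => (hSnn i).lt_of_ne' (hzero i hi)
    set c : ι → ℝ := fun i => (S i) ^ ((n : ℝ)⁻¹) with hc
    have hcpos : ∀ i ∈ s, 0 < c i := fun i hi => Real.rpow_pos_of_pos (hSpos i hi) _
    have hcn : ∀ i ∈ s, c i ^ n = S i := by
      intro i hi
      rw [hc, ← Real.rpow_natCast ((S i) ^ ((n : ℝ)⁻¹)) n, ← Real.rpow_mul (hSnn i),
        inv_mul_cancel₀ hnR.ne', Real.rpow_one]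
    -- pointwise AM-GM
    have key : ∀ ω : Ω, ∏ i ∈ s, (F i ω / c i) ≤ ∑ i ∈ s, (n : ℝ)⁻¹ * (F i ω / c i) ^ n := by
      intro ω
      have hw : ∀ i ∈ s, (0 : ℝ) ≤ (n : ℝ)⁻¹ := fun _ _ => by positivity
      have hw' : ∑ _i ∈ s, (n : ℝ)⁻¹ = 1 := by
        rw [Finset.sum_const, nsmul_eq_mul, ← hn, mul_inv_cancel₀ hnR.ne']
      have hz : ∀ i ∈ s, (0 : ℝ) ≤ (F i ω / c i) ^ n := fun i hi =>
        pow_nonneg (div_nonneg (hF i ω) (hcpos i hi).le) n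
      have := Real.geom_mean_le_arith_mean_weighted s (fun _ => (n : ℝ)⁻¹)
        (fun i => (F i ω / c i) ^ n) hw hw' hz
      refine le_trans (le_of_eq ?_) this
      refine Finset.prod_congr rfl fun i hi => ?_
      have hq : (0 : ℝ) ≤ F i ω / c i := div_nonneg (hF i ω) (hcpos i hi).le
      rw [← Real.rpow_natCast (F i ω / c i) n, ← Real.rpow_mul hq,
        mul_inv_cancel₀ hnR.ne', Real.rpow_one]
    have hsum : ∑ ω : Ω, ∏ i ∈ s, (F i ω / c i) ≤ 1 := by
      calc ∑ ω : Ω, ∏ i ∈ s, (F i ω / c i)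
          ≤ ∑ ω : Ω, ∑ i ∈ s, (n : ℝ)⁻¹ * (F i ω / c i) ^ n :=
            Finset.sum_le_sum fun ω _ => key ω
        _ = ∑ i ∈ s, (n : ℝ)⁻¹ * (S i / c i ^ n) := by
            rw [Finset.sum_comm]
            refine Finset.sum_congr rfl fun i hi => ?_
            rw [← Finset.mul_sum]
            congr 1
            rw [hS]
            simp only [div_pow]
            rw [← Finset.sum_div]
        _ = ∑ _i ∈ s, (n : ℝ)⁻¹ := by
            refine Finset.sum_congr rfl fun i hi => ?_
            rw [hcn i hi, div_self (hSpos i hi).ne', mul_one]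
        _ = 1 := by rw [Finset.sum_const, nsmul_eq_mul, ← hn, mul_inv_cancel₀ hnR.ne']
    have hprodc : (0 : ℝ) < ∏ i ∈ s, c i := Finset.prod_pos hcpos
    have : (∑ ω : Ω, ∏ i ∈ s, F i ω) / ∏ i ∈ s, c i ≤ 1 := by
      rw [div_le_one hprodc] at *
      calc ∑ ω : Ω, ∏ i ∈ s, F i ω
          = (∑ ω : Ω, ∏ i ∈ s, (F i ω / c i)) * ∏ i ∈ s, c i := by
            rw [Finset.sum_mul]
            refine Finset.sum_congr rfl fun ω _ => ?_
            rw [← Finset.prod_mul_distrib]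
            exact Finset.prod_congr rfl fun i hi =>
              (div_mul_cancel₀ _ (hcpos i hi).ne').symm
        _ ≤ 1 * ∏ i ∈ s, c i := by
            exact mul_le_mul_of_nonneg_right hsum hprodc.le
        _ = ∏ i ∈ s, c i := one_mul _
    exact (div_le_one hprodc).1 this

/-- Gowers–Hölder inequality for grids (Lemma 5.7 of the paper). -/
theorem gowers_holder_grid
    (k l : ℕ) (hk : 0 < k) (hl : 0 < l)
    (X Y : Type*) [Fintype X] [Fintype Y] [Nonempty X] [Nonempty Y]
    (f : Fin k → Fin l → X → Y → ℝ)
    (hf : ∀ i j x y, 0 ≤ f i j x y) :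
    (∑ x : Fin k → X, ∑ y : Fin l → Y, ∏ i : Fin k, ∏ j : Fin l, f i j (x i) (y j)) /
        ((Fintype.card X : ℝ) ^ k * (Fintype.card Y : ℝ) ^ l) ≤
      ∏ i : Fin k, ∏ j : Fin l,
        ((∑ x : Fin k → X, ∑ y : Fin l → Y, ∏ i' : Fin k, ∏ j' : Fin l, f i j (x i') (y j')) /
            ((Fintype.card X : ℝ) ^ k * (Fintype.card Y : ℝ) ^ l)) ^
          ((1 : ℝ) / ((k : ℝ) * (l : ℝ))) := by
  haveI : Nonempty (Fin k) := ⟨⟨0, hk⟩⟩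
  haveI : Nonempty (Fin l) := ⟨⟨0, hl⟩⟩
  have hkR : (0 : ℝ) < (k : ℝ) := by exact_mod_cast hk
  have hlR : (0 : ℝ) < (l : ℝ) := by exact_mod_cast hl
  set D : ℝ := (Fintype.card X : ℝ) ^ k * (Fintype.card Y : ℝ) ^ l with hD
  have hDpos : 0 < D := by
    have : 0 < Fintype.card X := Fintype.card_pos
    have : 0 < Fintype.card Y := Fintype.card_pos
    positivity
  set A : Fin k → (Fin l → Y) → ℝ := fun i y => ∑ x : X, ∏ j : Fin l, f i j x (y j) with hA
  set B : Fin k → Fin l → (Fin k → X) → ℝ :=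
    fun i j x => ∑ y : Y, ∏ i' : Fin k, f i j (x i') y with hB
  set S : Fin k → Fin l → ℝ := fun i j =>
    ∑ x : Fin k → X, ∑ y : Fin l → Y, ∏ i' : Fin k, ∏ j' : Fin l, f i j (x i') (y j') with hSdef
  have hAnn : ∀ i y, 0 ≤ A i y := fun i y =>
    Finset.sum_nonneg fun x _ => Finset.prod_nonneg fun j _ => hf i j x (y j)
  have hBnn : ∀ i j x, 0 ≤ B i j x := fun i j x =>
    Finset.sum_nonneg fun y _ => Finset.prod_nonneg fun i' _ => hf i j (x i') y
  have hSnn : ∀ i j, 0 ≤ S i j := fun i j =>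
    Finset.sum_nonneg fun x _ => Finset.sum_nonneg fun y _ =>
      Finset.prod_nonneg fun i' _ => Finset.prod_nonneg fun j' _ => hf i j (x i') (y j')
  -- Step 1: the LHS sum equals ∑ y, ∏ i, A i y
  have step1 : (∑ x : Fin k → X, ∑ y : Fin l → Y, ∏ i : Fin k, ∏ j : Fin l, f i j (x i) (y j))
      = ∑ y : Fin l → Y, ∏ i : Fin k, A i y := by
    rw [Finset.sum_comm]
    exact Finset.sum_congr rfl fun y _ =>
      sum_pi_prod (fun i x => ∏ j : Fin l, f i j x (y j))
  -- Step 3: ∑ y, (A i y)^k = ∑ x, ∏ j, B i j x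
  have step3 : ∀ i : Fin k, (∑ y : Fin l → Y, (A i y) ^ k) = ∑ x : Fin k → X, ∏ j : Fin l, B i j x := by
    intro i
    have hAy : ∀ y : Fin l → Y, (A i y) ^ k
        = ∑ x : Fin k → X, ∏ i' : Fin k, ∏ j : Fin l, f i j (x i') (y j) := by
      intro y
      rw [sum_pi_prod (fun (_ : Fin k) (x : X) => ∏ j : Fin l, f i j x (y j))]
      rw [Finset.prod_const, Finset.card_univ, Fintype.card_fin]
    calc (∑ y : Fin l → Y, (A i y) ^ k)
        = ∑ y : Fin l → Y, ∑ x : Fin k → X, ∏ i' : Fin k, ∏ j : Fin l, f i j (x i') (y j) :=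
          Finset.sum_congr rfl fun y _ => hAy y
      _ = ∑ x : Fin k → X, ∑ y : Fin l → Y, ∏ j : Fin l, ∏ i' : Fin k, f i j (x i') (y j) := by
          rw [Finset.sum_comm]
          exact Finset.sum_congr rfl fun x _ => Finset.sum_congr rfl fun y _ =>
            Finset.prod_comm
      _ = ∑ x : Fin k → X, ∏ j : Fin l, B i j x := by
          refine Finset.sum_congr rfl fun x _ => ?_
          exact sum_pi_prod (fun (j : Fin l) (y : Y) => ∏ i' : Fin k, f i j (x i') y)
  -- Step 5: ∑ x, (B i j x)^l = S i j
  have step5 : ∀ (i : Fin k) (j : Fin l), (∑ x : Fin k → X, (B i j x) ^ l) = S i j := by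
    intro i j
    refine Finset.sum_congr rfl fun x _ => ?_
    have : (B i j x) ^ l = ∑ y : Fin l → Y, ∏ j' : Fin l, ∏ i' : Fin k, f i j (x i') (y j') := by
      rw [sum_pi_prod (fun (_ : Fin l) (y : Y) => ∏ i' : Fin k, f i j (x i') y)]
      rw [Finset.prod_const, Finset.card_univ, Fintype.card_fin]
    rw [this]
    exact Finset.sum_congr rfl fun y _ => Finset.prod_comm
  -- Hölder applications
  have hUnivK : (Finset.univ : Finset (Fin k)).card = k := by
    rw [Finset.card_univ, Fintype.card_fin]
  have hUnivL : (Finset.univ : Finset (Fin l)).card = l := by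
    rw [Finset.card_univ, Fintype.card_fin]
  have holder1 : ∑ y : Fin l → Y, ∏ i : Fin k, A i y
      ≤ ∏ i : Fin k, (∑ y : Fin l → Y, (A i y) ^ k) ^ ((k : ℝ)⁻¹) := by
    have := holder_uniform (Finset.univ : Finset (Fin k)) Finset.univ_nonempty A
      (fun i y => hAnn i y)
    rwa [hUnivK] at this
  have holder2 : ∀ i : Fin k, ∑ x : Fin k → X, ∏ j : Fin l, B i j x
      ≤ ∏ j : Fin l, (∑ x : Fin k → X, (B i j x) ^ l) ^ ((l : ℝ)⁻¹) := by
    intro i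
    have := holder_uniform (Finset.univ : Finset (Fin l)) Finset.univ_nonempty
      (fun j x => B i j x) (fun j x => hBnn i j x)
    rwa [hUnivL] at this
  -- Combine: LHS sum ≤ ∏ i ∏ j (S i j) ^ (1/(k*l))
  have main : (∑ x : Fin k → X, ∑ y : Fin l → Y, ∏ i : Fin k, ∏ j : Fin l, f i j (x i) (y j))
      ≤ ∏ i : Fin k, ∏ j : Fin l, (S i j) ^ ((1 : ℝ) / ((k : ℝ) * (l : ℝ))) := by
    rw [step1]
    refine le_trans holder1 ?_
    refine Finset.prod_le_prod (fun i _ => Real.rpow_nonneg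
      (Finset.sum_nonneg fun y _ => pow_nonneg (hAnn i y) k) _) fun i _ => ?_
    rw [step3 i]
    calc (∑ x : Fin k → X, ∏ j : Fin l, B i j x) ^ ((k : ℝ)⁻¹)
        ≤ (∏ j : Fin l, (∑ x : Fin k → X, (B i j x) ^ l) ^ ((l : ℝ)⁻¹)) ^ ((k : ℝ)⁻¹) := by
          refine Real.rpow_le_rpow ?_ (holder2 i) (by positivity)
          exact Finset.sum_nonneg fun x _ => Finset.prod_nonneg fun j _ => hBnn i j x
      _ = ∏ j : Fin l, (S i j) ^ ((1 : ℝ) / ((k : ℝ) * (l : ℝ))) := by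
          rw [← Real.finset_prod_rpow _ _ (fun j _ => Real.rpow_nonneg
            (Finset.sum_nonneg fun x _ => pow_nonneg (hBnn i j x) l) _) ((k : ℝ)⁻¹)]
          refine Finset.prod_congr rfl fun j _ => ?_
          rw [step5 i j, ← Real.rpow_mul (hSnn i j)]
          congr 1
          rw [one_div, mul_inv]
          ring
  -- Finish: divide by D
  have hDe : ((D ^ ((1 : ℝ) / ((k : ℝ) * (l : ℝ)))) ^ l) ^ k = D := by
    rw [← Real.rpow_natCast (D ^ ((1 : ℝ) / ((k : ℝ) * (l : ℝ)))) l,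
      ← Real.rpow_mul hDpos.le,
      ← Real.rpow_natCast (D ^ ((1 : ℝ) / ((k : ℝ) * (l : ℝ)) * (l : ℝ))) k,
      ← Real.rpow_mul hDpos.le]
    rw [show (1 : ℝ) / ((k : ℝ) * (l : ℝ)) * (l : ℝ) * (k : ℝ) = 1 by field_simp]
    exact Real.rpow_one D
  have hxpand : ∀ (i : Fin k) (j : Fin l),
      (S i j / D) ^ ((1 : ℝ) / ((k : ℝ) * (l : ℝ)))
      = (S i j) ^ ((1 : ℝ) / ((k : ℝ) * (l : ℝ))) / D ^ ((1 : ℝ) / ((k : ℝ) * (l : ℝ))) :=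
    fun i j => Real.div_rpow (hSnn i j) hDpos.le _
  have final : (∑ x : Fin k → X, ∑ y : Fin l → Y, ∏ i : Fin k, ∏ j : Fin l, f i j (x i) (y j)) / D
      ≤ ∏ i : Fin k, ∏ j : Fin l, (S i j / D) ^ ((1 : ℝ) / ((k : ℝ) * (l : ℝ))) := by
    calc (∑ x : Fin k → X, ∑ y : Fin l → Y, ∏ i : Fin k, ∏ j : Fin l, f i j (x i) (y j)) / D
        ≤ (∏ i : Fin k, ∏ j : Fin l, (S i j) ^ ((1 : ℝ) / ((k : ℝ) * (l : ℝ)))) / D :=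
          (div_le_div_iff_of_pos_right hDpos).2 main
      _ = ∏ i : Fin k, ∏ j : Fin l, (S i j / D) ^ ((1 : ℝ) / ((k : ℝ) * (l : ℝ))) := by
          simp only [hxpand, Finset.prod_div_distrib, Finset.prod_const, Finset.card_univ,
            Fintype.card_fin]
          rw [hDe]
  simp only [hSdef] at final
  exact final
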